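/- For every integer r ≥ 1 there holds Σ_{i=1}^{r} e_{2i} · g_{2i,2r+1} = (q^{r(2r+1)} - 1)/(q - 1) in K. -/

import Mathlib

open Finset

noncomputable def q : RatFunc ℚ := RatFunc.X

noncomputable def gauss (x : RatFunc ℚ) (m r : ℤ) : RatFunc ℚ :=
  if 0 ≤ r ∧ r ≤ m then
    ∏ i ∈ Finset.range r.toNat, (1 - x ^ (m - (i : ℤ))) / (1 - x ^ ((i : ℤ) + 1))
  else 0

noncomputable def e (i : ℤ) : RatFunc ℚ :=
  q ^ (i * (i - 1)) * (∏ j ∈ Finset.Icc (1 : ℤ) i, (q ^ (2 * j - 1) - 1)) / (q - 1)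

lemma q_pow_ne_one (j : ℕ) (hj : j ≠ 0) : q ^ j ≠ 1 := by
  have : (Polynomial.X : Polynomial ℚ) ^ j ≠ 1 := by
    intro h
    have := congrArg Polynomial.natDegree h
    simp [Polynomial.natDegree_X_pow] at this
    exact hj this
  intro h
  apply this
  apply RatFunc.algebraMap_injective ℚ
  rw [map_pow, map_one, RatFunc.algebraMap_X]
  exact h

lemma one_sub_q_pow_ne_zero (j : ℕ) (hj : j ≠ 0) : (1 : RatFunc ℚ) - q ^ j ≠ 0 := by
  intro h
  exact q_pow_ne_one j hj (by linear_combination -h)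

lemma q_ne_zero : q ≠ 0 := RatFunc.X_ne_zero

noncomputable def fac (n : ℕ) : RatFunc ℚ := ∏ i ∈ Finset.range n, (1 - q ^ (i + 1))

lemma fac_ne_zero (n : ℕ) : fac n ≠ 0 :=
  Finset.prod_ne_zero_iff.2 fun i _ => one_sub_q_pow_ne_zero (i + 1) (by omega)

lemma fac_succ (n : ℕ) : fac (n + 1) = fac n * (1 - q ^ (n + 1)) := Finset.prod_range_succ _ n

@[simp] lemma fac_zero : fac 0 = 1 := Finset.prod_range_zero _

noncomputable def B (n k : ℕ) : RatFunc ℚ :=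
  if k ≤ n then fac n / (fac k * fac (n - k)) else 0

lemma B_of_gt {n k : ℕ} (h : n < k) : B n k = 0 := if_neg (by omega)

@[simp] lemma B_zero (n : ℕ) : B n 0 = 1 := by
  simp [B, div_self (fac_ne_zero n)]

lemma B_self (n : ℕ) : B n n = 1 := by
  simp [B, div_self (fac_ne_zero n)]

lemma prod_num (n k : ℕ) (h : k ≤ n) :
    ∏ i ∈ Finset.range k, (1 - q ^ (n - i)) = fac n / fac (n - k) := by
  induction k with
  | zero => simp [div_self (fac_ne_zero n)]
  | succ k ih =>
    have hk : k ≤ n := by omega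
    rw [Finset.prod_range_succ, ih hk]
    have h1 : n - k = (n - (k + 1)) + 1 := by omega
    rw [h1, fac_succ]
    have h2 : n - (k+1) + 1 = n - k := by omega
    rw [h2]
    have hB := one_sub_q_pow_ne_zero (n - k) (by omega : n - k ≠ 0)
    have hA := fac_ne_zero (n - (k + 1))
    field_simp

lemma gauss_eq_B (n k : ℕ) : gauss q (n : ℤ) (k : ℤ) = B n k := by
  by_cases h : k ≤ n
  · rw [gauss, if_pos ⟨Int.ofNat_nonneg k, by exact_mod_cast h⟩, B, if_pos h]
    have htn : ((k : ℤ)).toNat = k := Int.toNat_natCast k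
    rw [htn]
    have hterm : ∀ i ∈ Finset.range k,
        (1 - q ^ ((n : ℤ) - (i : ℤ))) / (1 - q ^ ((i : ℤ) + 1))
          = (1 - q ^ (n - i)) / (1 - q ^ (i + 1)) := by
      intro i hi
      have hi' : i < k := Finset.mem_range.1 hi
      have h1 : (n : ℤ) - (i : ℤ) = ((n - i : ℕ) : ℤ) := by omega
      have h2 : (i : ℤ) + 1 = ((i + 1 : ℕ) : ℤ) := by omega
      rw [h1, h2, zpow_natCast, zpow_natCast]
    rw [Finset.prod_congr rfl hterm, Finset.prod_div_distrib,
      prod_num n k h]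
    have : ∏ i ∈ Finset.range k, (1 - q ^ (i + 1)) = fac k := rfl
    rw [this, div_div, mul_comm (fac (n-k)) (fac k)]
  · rw [gauss, if_neg (by omega), B_of_gt (by omega)]

lemma B_pascal (n k : ℕ) : B (n + 1) (k + 1) = B n k + q ^ (k + 1) * B n (k + 1) := by
  rcases lt_trichotomy (k + 1) (n + 1) with h | h | h
  · -- k + 1 ≤ n
    have hk : k + 1 ≤ n := by omega
    obtain ⟨a, ha⟩ : ∃ a, n = k + 1 + a := ⟨n - (k + 1), by omega⟩
    subst ha
    rw [B, if_pos (by omega), B, if_pos (by omega), B, if_pos (by omega)]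
    have e1 : k + 1 + a + 1 - (k + 1) = a + 1 := by omega
    have e2 : k + 1 + a - k = a + 1 := by omega
    have e3 : k + 1 + a - (k + 1) = a := by omega
    rw [e1, e2, e3]
    rw [show k + 1 + a + 1 = (k + 1 + a) + 1 from rfl, fac_succ (k + 1 + a),
      fac_succ k, fac_succ a]
    have h1 := fac_ne_zero k
    have h2 := fac_ne_zero a
    have h3 := fac_ne_zero (k + 1 + a)
    have h4 := one_sub_q_pow_ne_zero (k + 1) (by omega)
    have h5 := one_sub_q_pow_ne_zero (a + 1) (by omega)
    field_simp
    ring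
  · -- k = n
    have : k = n := by omega
    subst this
    rw [B_self, B_self, B_of_gt (by omega)]
    ring
  · rw [B_of_gt (by omega), B_of_gt (by omega), B_of_gt (by omega)]
    ring

noncomputable def c (i : ℕ) : RatFunc ℚ :=
  q ^ (i * (i - 1)) * ∏ j ∈ Finset.Icc 1 i, (q ^ (2 * j - 1) - 1)

@[simp] lemma c_zero : c 0 = 1 := by simp [c]

lemma c_succ (i : ℕ) : c (i + 1) = c i * (q ^ (2 * i) * (q ^ (2 * i + 1) - 1)) := by
  rw [c, c, Finset.prod_Icc_succ_top (by omega : 1 ≤ i + 1)]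
  have h1 : (i + 1) * (i + 1 - 1) = i * (i - 1) + 2 * i := by
    cases i with
    | zero => rfl
    | succ m =>
        simp only [Nat.add_sub_cancel]
        ring
  have h2 : 2 * (i + 1) - 1 = 2 * i + 1 := by omega
  rw [h1, h2, pow_add]
  ring

lemma key (n i : ℕ) :
    c (i + 1) * B n (2 * i + 1) = c i * (q ^ n - q ^ (2 * i)) * B n (2 * i) := by
  rcases lt_trichotomy n (2 * i) with h | h | h
  · rw [B_of_gt (by omega), B_of_gt (by omega)]; ring
  · subst h
    rw [B_of_gt (by omega), sub_self]
    ring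
  · -- 2 * i + 1 ≤ n
    obtain ⟨a, ha⟩ : ∃ a, n = 2 * i + 1 + a := ⟨n - (2 * i + 1), by omega⟩
    subst ha
    rw [c_succ, B, if_pos (by omega), B, if_pos (by omega)]
    have e1 : 2 * i + 1 + a - (2 * i + 1) = a := by omega
    have e2 : 2 * i + 1 + a - 2 * i = a + 1 := by omega
    rw [e1, e2, fac_succ (2 * i), fac_succ a]
    have h1 := fac_ne_zero (2 * i)
    have h2 := fac_ne_zero a
    have h4 := one_sub_q_pow_ne_zero (2 * i + 1) (by omega)
    have h5 := one_sub_q_pow_ne_zero (a + 1) (by omega)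
    field_simp
    ring

lemma main_sum (n : ℕ) :
    ∑ i ∈ Finset.range (n + 1), c i * B n (2 * i) = q ^ n.choose 2 := by
  induction n with
  | zero => simp
  | succ n ih =>
    have step : ∑ i ∈ Finset.range (n + 2), c i * B (n + 1) (2 * i)
        = q ^ n * ∑ i ∈ Finset.range (n + 1), c i * B n (2 * i) := by
      rw [Finset.sum_range_succ' (fun i => c i * B (n + 1) (2 * i)) (n + 1)]
      have hterm : ∀ i, c (i + 1) * B (n + 1) (2 * (i + 1))
          = c (i + 1) * B n (2 * i + 1) + c (i + 1) * (q ^ (2 * i + 2) * B n (2 * i + 2)) := by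
        intro i
        have : 2 * (i + 1) = (2 * i + 1) + 1 := by omega
        rw [this, B_pascal]
        ring
      simp only [hterm]
      rw [Finset.sum_add_distrib]
      -- first sum via key
      have hfirst : ∑ i ∈ Finset.range (n + 1), c (i + 1) * B n (2 * i + 1)
          = ∑ i ∈ Finset.range (n + 1), c i * (q ^ n - q ^ (2 * i)) * B n (2 * i) :=
        Finset.sum_congr rfl fun i _ => key n i
      -- second sum : shift
      have hsecond : ∑ i ∈ Finset.range (n + 1), c (i + 1) * (q ^ (2 * i + 2) * B n (2 * i + 2))
          = (∑ i ∈ Finset.range (n + 1), c i * (q ^ (2 * i) * B n (2 * i))) - 1 := by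
        have h0 : ∑ i ∈ Finset.range (n + 2), c i * (q ^ (2 * i) * B n (2 * i))
            = (∑ i ∈ Finset.range (n + 1), c (i + 1) * (q ^ (2 * (i + 1)) * B n (2 * (i + 1))))
              + c 0 * (q ^ (2 * 0) * B n (2 * 0)) :=
          Finset.sum_range_succ' (fun i => c i * (q ^ (2 * i) * B n (2 * i))) (n + 1)
        have h1 : ∑ i ∈ Finset.range (n + 2), c i * (q ^ (2 * i) * B n (2 * i))
            = (∑ i ∈ Finset.range (n + 1), c i * (q ^ (2 * i) * B n (2 * i)))
              + c (n + 1) * (q ^ (2 * (n + 1)) * B n (2 * (n + 1))) :=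
          Finset.sum_range_succ _ (n + 1)
        rw [B_of_gt (by omega : n < 2 * (n + 1))] at h1
        simp only [mul_zero, add_zero] at h1
        have : ∀ i, 2 * (i + 1) = 2 * i + 2 := fun i => by omega
        simp only [this] at h0
        simp only [c_zero, mul_zero, pow_zero, one_mul, B_zero, mul_one] at h0
        linear_combination h1 - h0
      rw [hfirst, hsecond, B_zero, c_zero]
      have hcomb : (∑ i ∈ Finset.range (n + 1), c i * (q ^ n - q ^ (2 * i)) * B n (2 * i))
          + ∑ i ∈ Finset.range (n + 1), c i * (q ^ (2 * i) * B n (2 * i))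
          = q ^ n * ∑ i ∈ Finset.range (n + 1), c i * B n (2 * i) := by
        rw [← Finset.sum_add_distrib, Finset.mul_sum]
        exact Finset.sum_congr rfl fun i _ => by ring
      linear_combination hcomb
    rw [step, ih]
    rw [← pow_add]
    congr 1
    rw [Nat.choose_two_right, Nat.choose_two_right]
    have h2 : (n + 1) * (n + 1 - 1) = n * (n - 1) + 2 * n := by
      cases n with
      | zero => rfl
      | succ m => simp only [Nat.add_sub_cancel]; ring
    rw [h2]
    omega

lemma main_sum' (s : ℕ) :
    ∑ i ∈ Finset.Icc 1 s, c i * B (2 * s + 1) (2 * i) = q ^ (s * (2 * s + 1)) - 1 := by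
  have h := main_sum (2 * s + 1)
  have hch : (2 * s + 1).choose 2 = s * (2 * s + 1) := by
    rw [Nat.choose_two_right]
    have : (2 * s + 1) * (2 * s + 1 - 1) = s * (2 * s + 1) * 2 := by
      simp only [Nat.add_sub_cancel]; ring
    rw [this, Nat.mul_div_cancel _ (by norm_num)]
  rw [hch] at h
  have htrunc : ∑ i ∈ Finset.range (2 * s + 1 + 1), c i * B (2 * s + 1) (2 * i)
      = ∑ i ∈ Finset.range (s + 1), c i * B (2 * s + 1) (2 * i) := by
    symm
    apply Finset.sum_subset
    · intro x hx; simp only [Finset.mem_range] at *; omega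
    · intro x _ hx
      simp only [Finset.mem_range, not_lt] at hx
      rw [B_of_gt (by omega)]
      ring
  rw [htrunc] at h
  rw [Finset.sum_range_succ' (fun i => c i * B (2 * s + 1) (2 * i)) s] at h
  have hz : c 0 * B (2 * s + 1) (2 * 0) = 1 := by norm_num
  rw [hz] at h
  have hicc : ∑ i ∈ Finset.Icc 1 s, c i * B (2 * s + 1) (2 * i)
      = ∑ i ∈ Finset.range s, c (i + 1) * B (2 * s + 1) (2 * (i + 1)) := by
    rw [← Finset.Ico_add_one_right_eq_Icc, Finset.sum_Ico_eq_sum_range]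
    exact Finset.sum_congr rfl fun i _ => by rw [Nat.add_comm 1 i]
  rw [hicc]
  linear_combination h

lemma e_eq (m : ℕ) (hm : 1 ≤ m) : e (m : ℤ) = c m / (q - 1) := by
  rw [e, c]
  congr 2
  · have h1 : (m : ℤ) * ((m : ℤ) - 1) = ((m * (m - 1) : ℕ) : ℤ) := by
      have : ((m - 1 : ℕ) : ℤ) = (m : ℤ) - 1 := by omega
      push_cast [this]; ring
    rw [h1, zpow_natCast]
  · apply Finset.prod_nbij' (fun a : ℤ => a.toNat) (fun b : ℕ => (b : ℤ))
    · intro a ha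
      simp only [Finset.mem_Icc] at *
      omega
    · intro b hb
      simp only [Finset.mem_Icc] at *
      omega
    · intro a ha
      simp only [Finset.mem_Icc] at ha
      omega
    · intro b _
      exact Int.toNat_natCast b
    · intro a ha
      simp only [Finset.mem_Icc] at ha
      have h2 : 2 * a - 1 = ((2 * a.toNat - 1 : ℕ) : ℤ) := by omega
      rw [h2, zpow_natCast]

theorem stmt2 (r : ℤ) (hr : 1 ≤ r) :
    ∑ i ∈ Finset.Icc (1 : ℤ) r, e i * gauss q (2 * r + 1) (2 * i) =
      (q ^ (r * (2 * r + 1)) - 1) / (q - 1) := by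
  obtain ⟨s, rfl⟩ : ∃ s : ℕ, (s : ℤ) = r := ⟨r.toNat, Int.toNat_of_nonneg (by omega)⟩
  have hs1 : 1 ≤ s := by exact_mod_cast hr
  have hsum : ∑ i ∈ Finset.Icc (1 : ℤ) (s : ℤ), e i * gauss q (2 * (s : ℤ) + 1) (2 * i)
      = ∑ m ∈ Finset.Icc 1 s, c m * B (2 * s + 1) (2 * m) / (q - 1) := by
    apply Finset.sum_nbij' (fun a : ℤ => a.toNat) (fun b : ℕ => (b : ℤ))
    · intro a ha; simp only [Finset.mem_Icc] at *; omega
    · intro b hb; simp only [Finset.mem_Icc] at *; omega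
    · intro a ha; simp only [Finset.mem_Icc] at ha; omega
    · intro b _; exact Int.toNat_natCast b
    · intro a ha
      simp only [Finset.mem_Icc] at ha
      have h1 : a = ((a.toNat : ℕ) : ℤ) := by omega
      have h2 : 2 * (s : ℤ) + 1 = ((2 * s + 1 : ℕ) : ℤ) := by push_cast; ring
      have h3 : 2 * a = ((2 * a.toNat : ℕ) : ℤ) := by omega
      have he : e a = c a.toNat / (q - 1) := by
        conv_lhs => rw [h1]
        exact e_eq a.toNat (by omega)
      rw [h2, h3, gauss_eq_B, he]
      ring
  rw [hsum, ← Finset.sum_div, main_sum' s]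
  have h4 : (q : RatFunc ℚ) ^ ((s : ℤ) * (2 * (s : ℤ) + 1)) = q ^ (s * (2 * s + 1)) := by
    rw [show (s : ℤ) * (2 * (s : ℤ) + 1) = ((s * (2 * s + 1) : ℕ) : ℤ) by push_cast; ring,
      zpow_natCast]
  rw [h4]
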